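/- arXiv:2503.23059 — 2 statements merged into one kernel-verified Lean document; each statement's English description precedes it below -/
import Mathlib

section
/- Let f : F_q^k → F_q^l be a surjective linear map, k ≥ b ≥ 1, t ≥ 1, and let P = {p_0, …, p_{q^k−1}} ⊆ F_q^r be a code of length r (indexed by the elements u_0,…,u_{q^k−1} of F_q^k) satisfying d_b(p_i, p_j) ≥ max(2t − b + 2 − d_b(u_i, u_j), 0) whenever f(u_i) ≠ f(u_j). Then r ≥ (q^b/(q^b − 1))(2t − b + 2)(1 − q^{−l}) − k + (q^b/(q^b − 1))·(s/q^k), where s = Σ_{u ∈ ker f} w_b(u). -/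
open Finset

/-- The b-symbol read vector of `u`: the length-`k` vector of cyclic windows of length `b`. -/
def piB (F : Type*) (k b : ℕ) (u : Fin k → F) : Fin k → (Fin b → F) :=
  fun i j => u ⟨(i.val + j.val) % k, Nat.mod_lt _ i.pos⟩

/-- The b-symbol distance between `u` and `v`. -/
def dB (F : Type*) [DecidableEq F] (k b : ℕ) (u v : Fin k → F) : ℕ :=
  hammingDist (piB F k b u) (piB F k b v)

/-- The b-symbol weight of `u`: the number of nonzero cyclic windows of length `b`. -/
def wB (F : Type*) [DecidableEq F] [Zero F] (k b : ℕ) (u : Fin k → F) : ℕ :=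
  (Finset.univ.filter (fun i : Fin k => piB F k b u i ≠ 0)).card

section Aux
variable {V W : Type*}

lemma myFiberCard [Fintype V] [DecidableEq W] [AddGroup V] [AddGroup W]
    (g : V →+ W) (c : W) (hc : ∃ x, g x = c) :
    (univ.filter fun x => g x = c).card = (univ.filter fun x => g x = 0).card := by
  obtain ⟨x₀, hx₀⟩ := hc
  apply Finset.card_nbij' (fun x => x - x₀) (fun x => x + x₀)
  · intro a ha
    simp only [mem_coe, mem_filter, mem_univ, true_and] at ha ⊢
    simp [map_sub, ha, hx₀]
  · intro a ha
    simp only [mem_coe, mem_filter, mem_univ, true_and] at ha ⊢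
    simp [map_add, ha, hx₀]
  · intro a _; simp
  · intro a _; simp

lemma myCardDom [Fintype V] [Fintype W] [DecidableEq W] [AddGroup V] [AddGroup W]
    (g : V →+ W) (hg : Function.Surjective g) :
    Fintype.card V = Fintype.card W * (univ.filter fun x => g x = 0).card := by
  have h := Finset.card_eq_sum_card_fiberwise
    (f := fun x : V => g x) (s := univ) (t := univ) (fun x _ => mem_univ _)
  rw [card_univ] at h
  rw [h]
  rw [Finset.sum_congr rfl (fun c _ => myFiberCard g c (hg c))]
  simp [mul_comm, card_univ]

lemma myCS [Fintype V] [Fintype W] [DecidableEq W] (h : V → W) :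
    (Fintype.card W : ℤ) * ∑ u : V, ∑ v : V, (if h u ≠ h v then (1:ℤ) else 0)
      ≤ (Fintype.card V : ℤ)^2 * (Fintype.card W - 1) := by
  classical
  set n : W → ℕ := fun c => (univ.filter fun x => h x = c).card with hn
  have hsum_n : ∑ c : W, (n c : ℤ) = (Fintype.card V : ℤ) := by
    rw [← Nat.cast_sum]
    norm_cast
    rw [← card_univ, Finset.card_eq_sum_card_fiberwise (f := h) (t := univ) (fun x _ => mem_univ _)]
  have hpairs : ∑ u : V, ∑ v : V, (if h u = h v then (1:ℤ) else 0)
      = ∑ c : W, (n c : ℤ) * (n c : ℤ) := by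
    have inner : ∀ u : V, ∑ v : V, (if h u = h v then (1:ℤ) else 0) = (n (h u) : ℤ) := by
      intro u
      simp only [eq_comm (a := h u)]
      rw [Finset.sum_boole]
    rw [Finset.sum_congr rfl (fun u _ => inner u)]
    rw [← Finset.sum_fiberwise' univ h (fun c => (n c : ℤ))]
    refine Finset.sum_congr rfl (fun c _ => ?_)
    rw [Finset.sum_const, nsmul_eq_mul]
  have hCS : (∑ c : W, (n c : ℤ))^2 ≤ (Fintype.card W : ℤ) * ∑ c : W, (n c : ℤ)^2 := by
    simpa [card_univ] using
      sq_sum_le_card_mul_sum_sq (s := (univ : Finset W)) (f := fun c => (n c : ℤ))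
  have hsplit : ∑ u : V, ∑ v : V, (if h u ≠ h v then (1:ℤ) else 0)
      = (Fintype.card V : ℤ)^2 - ∑ c : W, (n c : ℤ) * (n c : ℤ) := by
    rw [← hpairs]
    have : ∀ u v : V, (if h u ≠ h v then (1:ℤ) else 0) = 1 - (if h u = h v then (1:ℤ) else 0) := by
      intro u v; by_cases hc : h u = h v <;> simp [hc]
    simp only [this, Finset.sum_sub_distrib, Finset.sum_const, card_univ, nsmul_eq_mul, mul_one]
    ring
  rw [hsplit]
  have h2 : (Fintype.card V : ℤ)^2 ≤ (Fintype.card W : ℤ) * ∑ c : W, (n c : ℤ) * (n c : ℤ) := by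
    calc (Fintype.card V : ℤ)^2 = (∑ c : W, (n c : ℤ))^2 := by rw [hsum_n]
    _ ≤ (Fintype.card W : ℤ) * ∑ c : W, (n c : ℤ)^2 := hCS
    _ = (Fintype.card W : ℤ) * ∑ c : W, (n c : ℤ) * (n c : ℤ) := by simp [sq]
  nlinarith [hpairs]

end Aux

lemma dB_eq_wB (F : Type*) [DecidableEq F] [AddGroup F] (k b : ℕ) (u v : Fin k → F) :
    dB F k b u v = wB F k b (u - v) := by
  unfold dB wB hammingDist
  apply Finset.card_bij (fun i _ => i) ?_ (fun a _ b _ h => h) (fun i hi => ⟨i, ?_, rfl⟩)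
  · intro i hi
    simp only [mem_filter, mem_univ, true_and] at hi ⊢
    intro hzero
    apply hi
    have hsub : piB F k b (u - v) i = piB F k b u i - piB F k b v i := by
      funext j; rfl
    rw [hsub] at hzero
    exact sub_eq_zero.mp hzero
  · simp only [mem_filter, mem_univ, true_and] at hi ⊢
    intro heq
    apply hi
    have hsub : piB F k b (u - v) i = piB F k b u i - piB F k b v i := by
      funext j; rfl
    rw [hsub, heq, sub_self]

lemma windowSurj {F : Type*} [Zero F] (k b : ℕ) (hb : 1 ≤ b) (hbk : b ≤ k) (i : Fin k) :
    Function.Surjective (fun w : Fin k → F => piB F k b w i) := by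
  have hk : 0 < k := lt_of_lt_of_le hb hbk
  classical
  set e : Fin b → Fin k := fun j => ⟨(i.val + j.val) % k, Nat.mod_lt _ hk⟩ with he
  have einj : Function.Injective e := by
    intro j₁ j₂ hj
    have h : (i.val + j₁.val) % k = (i.val + j₂.val) % k := congrArg Fin.val hj
    have h2 : j₁.val % k = j₂.val % k := Nat.ModEq.add_left_cancel' i.val h
    rw [Nat.mod_eq_of_lt (lt_of_lt_of_le j₁.isLt hbk),
        Nat.mod_eq_of_lt (lt_of_lt_of_le j₂.isLt hbk)] at h2
    exact Fin.ext h2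
  intro y
  refine ⟨fun x => if h : ∃ j : Fin b, e j = x then y h.choose else 0, ?_⟩
  funext j
  show (if h : ∃ j' : Fin b, e j' = e j then y h.choose else 0) = y j
  rw [dif_pos ⟨j, rfl⟩]
  congr 1
  exact einj (Exists.choose_spec (⟨j, rfl⟩ : ∃ j' : Fin b, e j' = e j))

theorem plotkin_bound_FCBSC_linear (F : Type*) [Field F] [Fintype F] [DecidableEq F]
    (q k l r b t : ℕ) (hq : Fintype.card F = q) (hb : 1 ≤ b) (hbk : b ≤ k) (ht : 1 ≤ t)
    (f : (Fin k → F) →ₗ[F] (Fin l → F)) (hf : Function.Surjective f)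
    (p : (Fin k → F) → (Fin r → F))
    (hp : ∀ u v : Fin k → F, f u ≠ f v →
      (dB F r b (p u) (p v) : ℤ) ≥ max (2 * (t : ℤ) - b + 2 - dB F k b u v) 0) :
    (r : ℝ) ≥ ((q : ℝ) ^ b / ((q : ℝ) ^ b - 1)) * (2 * (t : ℝ) - b + 2) * (1 - ((q : ℝ) ^ l)⁻¹)
      - k + ((q : ℝ) ^ b / ((q : ℝ) ^ b - 1)) *
        ((∑ u ∈ Finset.univ.filter (fun u : Fin k → F => f u = 0), (wB F k b u : ℝ)) / (q : ℝ) ^ k) := by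
  classical
  have hq2 : 2 ≤ q := hq ▸ Fintype.one_lt_card
  have hcardV : Fintype.card (Fin k → F) = q ^ k := by simp [Fintype.card_fun, hq]
  have hcardb : Fintype.card (Fin b → F) = q ^ b := by simp [Fintype.card_fun, hq]
  have hcardl : Fintype.card (Fin l → F) = q ^ l := by simp [Fintype.card_fun, hq]
  set K : ℕ := (univ.filter fun u : Fin k → F => f u = 0).card with hKdef
  set s0 : ℕ := ∑ u ∈ univ.filter (fun u : Fin k → F => f u = 0), wB F k b u with hs0
  -- fiber counts for f
  have hfK : q ^ k = q ^ l * K := by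
    have h := myCardDom (f.toAddMonoidHom) (fun y => hf y)
    rw [hcardV, hcardl] at h
    rw [h, hKdef]
    congr 1
  have hfiber : ∀ u : Fin k → F, (univ.filter fun v : Fin k → F => f v = f u).card = K := by
    intro u
    have h := myFiberCard (f.toAddMonoidHom) (f u) ⟨u, rfl⟩
    rw [hKdef]
    convert h using 2 <;> rfl
  -- window counts
  have hwin : ∀ i : Fin k,
      (univ.filter fun w : Fin k → F => piB F k b w i = 0).card = q ^ (k - b) := by
    intro i
    set g : (Fin k → F) →+ (Fin b → F) :=
      AddMonoidHom.mk' (fun w => piB F k b w i) (fun a c => rfl) with hg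
    have hs : Function.Surjective g := windowSurj k b hb hbk i
    have h1 := myCardDom g hs
    rw [hcardV, hcardb] at h1
    have h2 : (univ.filter fun x : Fin k → F => g x = 0)
        = (univ.filter fun w : Fin k → F => piB F k b w i = 0) := by
      apply Finset.filter_congr
      intro x _
      exact Iff.rfl
    rw [h2] at h1
    have h3 : q ^ k = q ^ b * q ^ (k - b) := by
      rw [← pow_add]; congr 1; omega
    have hqb : 0 < q ^ b := pow_pos (by omega) _
    exact Nat.eq_of_mul_eq_mul_left hqb (h1.symm.trans h3)
  -- total weight
  have hT : ∑ w : Fin k → F, (wB F k b w : ℤ) = (k:ℤ) * ((q:ℤ)^k - (q:ℤ)^(k-b)) := by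
    have hw : ∀ w : Fin k → F, (wB F k b w : ℤ)
        = ∑ i : Fin k, (if piB F k b w i ≠ 0 then (1:ℤ) else 0) := by
      intro w; rw [Finset.sum_boole]; simp [wB]
    rw [Finset.sum_congr rfl (fun w _ => hw w), Finset.sum_comm]
    have inner : ∀ i : Fin k, ∑ w : Fin k → F, (if piB F k b w i ≠ 0 then (1:ℤ) else 0)
        = (q:ℤ)^k - (q:ℤ)^(k-b) := by
      intro i
      have e1 : ∀ w : Fin k → F, (if piB F k b w i ≠ 0 then (1:ℤ) else 0)
          = 1 - (if piB F k b w i = 0 then (1:ℤ) else 0) := by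
        intro w; by_cases hc : piB F k b w i = 0 <;> simp [hc]
      simp only [e1, Finset.sum_sub_distrib, Finset.sum_const, card_univ, hcardV,
        nsmul_eq_mul, mul_one, Finset.sum_boole, hwin i]
      push_cast
      ring
    rw [Finset.sum_congr rfl (fun i _ => inner i)]
    simp only [Finset.sum_const, card_univ, Fintype.card_fin, nsmul_eq_mul]
  -- pair counts
  have pairA : ∀ u : Fin k → F,
      ∑ v : Fin k → F, (if f u ≠ f v then (1:ℤ) else 0) = (q:ℤ)^k - (K:ℤ) := by
    intro u
    have e1 : ∀ v : Fin k → F, (if f u ≠ f v then (1:ℤ) else 0)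
        = 1 - (if f v = f u then (1:ℤ) else 0) := by
      intro v
      rcases eq_or_ne (f u) (f v) with hc | hc
      · simp [hc]
      · simp [hc, Ne.symm hc]
    simp only [e1, Finset.sum_sub_distrib, Finset.sum_const, card_univ, hcardV,
      nsmul_eq_mul, mul_one, Finset.sum_boole, hfiber u]
    push_cast
    ring
  have pairB : ∀ u : Fin k → F,
      ∑ v : Fin k → F, (if f u ≠ f v then (dB F k b u v : ℤ) else 0)
      = ∑ w : Fin k → F, (if f w ≠ 0 then (wB F k b w : ℤ) else 0) := by
    intro u
    calc ∑ v : Fin k → F, (if f u ≠ f v then (dB F k b u v : ℤ) else 0)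
        = ∑ v : Fin k → F, (if f (u - v) ≠ 0 then (wB F k b (u - v) : ℤ) else 0) := by
          refine Finset.sum_congr rfl (fun v _ => ?_)
          rw [dB_eq_wB]
          exact if_congr ((not_congr (by rw [map_sub, sub_eq_zero])).symm) rfl rfl
      _ = _ := Equiv.sum_comp (Equiv.subLeft u)
          (fun w => if f w ≠ 0 then (wB F k b w : ℤ) else 0)
  have pairBsum : ∑ w : Fin k → F, (if f w ≠ 0 then (wB F k b w : ℤ) else 0)
      = (k:ℤ) * ((q:ℤ)^k - (q:ℤ)^(k-b)) - (s0:ℤ) := by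
    have e1 : ∀ w : Fin k → F, (if f w ≠ 0 then (wB F k b w : ℤ) else 0)
        = (wB F k b w : ℤ) - (if f w = 0 then (wB F k b w : ℤ) else 0) := by
      intro w; by_cases hc : f w = 0 <;> simp [hc]
    simp only [e1, Finset.sum_sub_distrib]
    rw [hT, ← Finset.sum_filter]
    congr 1
    rw [hs0]
    push_cast
    rfl
  -- main comparison
  have main1 : ∑ u : Fin k → F, ∑ v : Fin k → F,
        (if f u ≠ f v then (2 * (t:ℤ) - b + 2 - dB F k b u v) else 0)
      ≤ ∑ u : Fin k → F, ∑ v : Fin k → F, (dB F r b (p u) (p v) : ℤ) := by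
    refine Finset.sum_le_sum fun u _ => Finset.sum_le_sum fun v _ => ?_
    by_cases hc : f u ≠ f v
    · rw [if_pos hc]
      exact le_trans (le_max_left _ 0) (hp u v hc)
    · rw [if_neg hc]
      positivity
  have split : ∑ u : Fin k → F, ∑ v : Fin k → F,
        (if f u ≠ f v then (2 * (t:ℤ) - b + 2 - dB F k b u v) else 0)
      = (2 * (t:ℤ) - b + 2) * (∑ u : Fin k → F, ∑ v : Fin k → F, (if f u ≠ f v then (1:ℤ) else 0))
        - ∑ u : Fin k → F, ∑ v : Fin k → F, (if f u ≠ f v then (dB F k b u v : ℤ) else 0) := by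
    rw [Finset.mul_sum, ← Finset.sum_sub_distrib]
    refine Finset.sum_congr rfl fun u _ => ?_
    rw [Finset.mul_sum, ← Finset.sum_sub_distrib]
    refine Finset.sum_congr rfl fun v _ => ?_
    by_cases hc : f u ≠ f v <;> simp [hc]
  have hS1val : ∑ u : Fin k → F, ∑ v : Fin k → F,
        (if f u ≠ f v then (2 * (t:ℤ) - b + 2 - dB F k b u v) else 0)
      = (2 * (t:ℤ) - b + 2) * (((q:ℤ)^k)^2 - (q:ℤ)^k * K)
        - (q:ℤ)^k * ((k:ℤ) * ((q:ℤ)^k - (q:ℤ)^(k-b)) - s0) := by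
    rw [split]
    rw [Finset.sum_congr rfl (fun u _ => pairA u), Finset.sum_congr rfl (fun u _ => pairB u)]
    rw [pairBsum]
    simp only [Finset.sum_const, card_univ, hcardV, nsmul_eq_mul]
    push_cast
    ring
  -- bound on code side
  have hS2 : (q:ℤ)^b * ∑ u : Fin k → F, ∑ v : Fin k → F, (dB F r b (p u) (p v) : ℤ)
      ≤ (r:ℤ) * (((q:ℤ)^k)^2 * ((q:ℤ)^b - 1)) := by
    have expand : ∑ u : Fin k → F, ∑ v : Fin k → F, (dB F r b (p u) (p v) : ℤ)
        = ∑ i : Fin r, ∑ u : Fin k → F, ∑ v : Fin k → F,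
            (if piB F r b (p u) i ≠ piB F r b (p v) i then (1:ℤ) else 0) := by
      have hterm : ∀ u v : Fin k → F, (dB F r b (p u) (p v) : ℤ)
          = ∑ i : Fin r, (if piB F r b (p u) i ≠ piB F r b (p v) i then (1:ℤ) else 0) := by
        intro u v
        rw [Finset.sum_boole]
        simp [dB, hammingDist]
      rw [Finset.sum_congr rfl (fun u _ => Finset.sum_congr rfl (fun v _ => hterm u v))]
      rw [Finset.sum_congr rfl (fun u (_ : u ∈ univ) => Finset.sum_comm)]
      exact Finset.sum_comm
    rw [expand, Finset.mul_sum]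
    have hbound : ∀ i : Fin r, (q:ℤ)^b * ∑ u : Fin k → F, ∑ v : Fin k → F,
          (if piB F r b (p u) i ≠ piB F r b (p v) i then (1:ℤ) else 0)
        ≤ ((q:ℤ)^k)^2 * ((q:ℤ)^b - 1) := by
      intro i
      have h := myCS (fun u : Fin k → F => piB F r b (p u) i)
      rw [hcardV, hcardb] at h
      push_cast at h ⊢
      exact h
    calc ∑ i : Fin r, (q:ℤ)^b * ∑ u : Fin k → F, ∑ v : Fin k → F,
          (if piB F r b (p u) i ≠ piB F r b (p v) i then (1:ℤ) else 0)
        ≤ ∑ _i : Fin r, ((q:ℤ)^k)^2 * ((q:ℤ)^b - 1) :=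
          Finset.sum_le_sum (fun i _ => hbound i)
      _ = (r:ℤ) * (((q:ℤ)^k)^2 * ((q:ℤ)^b - 1)) := by
          simp [Finset.sum_const, Finset.card_univ, mul_comm]
  have final_int : (q:ℤ)^b * ((2 * (t:ℤ) - b + 2) * (((q:ℤ)^k)^2 - (q:ℤ)^k * K)
        - (q:ℤ)^k * ((k:ℤ) * ((q:ℤ)^k - (q:ℤ)^(k-b)) - s0))
      ≤ (r:ℤ) * (((q:ℤ)^k)^2 * ((q:ℤ)^b - 1)) := by
    calc (q:ℤ)^b * ((2 * (t:ℤ) - b + 2) * (((q:ℤ)^k)^2 - (q:ℤ)^k * K)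
          - (q:ℤ)^k * ((k:ℤ) * ((q:ℤ)^k - (q:ℤ)^(k-b)) - s0))
        = (q:ℤ)^b * ∑ u : Fin k → F, ∑ v : Fin k → F,
            (if f u ≠ f v then (2 * (t:ℤ) - b + 2 - dB F k b u v) else 0) := by
          rw [hS1val]
      _ ≤ (q:ℤ)^b * ∑ u : Fin k → F, ∑ v : Fin k → F, (dB F r b (p u) (p v) : ℤ) :=
          mul_le_mul_of_nonneg_left main1 (by positivity)
      _ ≤ _ := hS2
  -- pass to the reals
  have keyR : (q:ℝ)^b * ((2 * (t:ℝ) - b + 2) * (((q:ℝ)^k)^2 - (q:ℝ)^k * K)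
        - (q:ℝ)^k * ((k:ℝ) * ((q:ℝ)^k - (q:ℝ)^(k-b)) - s0))
      ≤ (r:ℝ) * (((q:ℝ)^k)^2 * ((q:ℝ)^b - 1)) := by
    exact_mod_cast final_int
  have hq0 : (0:ℝ) < q := by exact_mod_cast (by omega : 0 < q)
  have hx1 : (1:ℝ) < (q:ℝ)^b := by
    have : (1:ℝ) < (q:ℝ) := by exact_mod_cast (by omega : 1 < q)
    exact one_lt_pow₀ this (by omega)
  have hxne : ((q:ℝ)^b) ≠ 0 := by positivity
  have hx1ne : ((q:ℝ)^b - 1) ≠ 0 := by linarith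
  have hyne : ((q:ℝ)^k) ≠ 0 := by positivity
  have hlne : ((q:ℝ)^l) ≠ 0 := by positivity
  have hfKR : (q:ℝ)^k = (q:ℝ)^l * K := by exact_mod_cast hfK
  have h1 : ((q:ℝ)^l)⁻¹ = (K:ℝ)/(q:ℝ)^k := by
    rw [eq_div_iff hyne, hfKR, ← mul_assoc, inv_mul_cancel₀ hlne, one_mul]
  have hDq : (q:ℝ)^(k-b) = (q:ℝ)^k / (q:ℝ)^b := by
    rw [eq_div_iff hxne, ← pow_add]
    congr 1
    omega
  have hsR : ∑ u ∈ Finset.univ.filter (fun u : Fin k → F => f u = 0), (wB F k b u : ℝ)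
      = (s0:ℝ) := by
    rw [hs0]
    push_cast
    rfl
  have heq : ((q : ℝ) ^ b / ((q : ℝ) ^ b - 1)) * (2 * (t : ℝ) - b + 2) * (1 - ((q : ℝ) ^ l)⁻¹)
      - k + ((q : ℝ) ^ b / ((q : ℝ) ^ b - 1)) * ((s0:ℝ) / (q : ℝ) ^ k)
      = (r:ℝ) - ((r:ℝ) * (((q:ℝ)^k)^2 * ((q:ℝ)^b - 1))
          - (q:ℝ)^b * ((2 * (t:ℝ) - b + 2) * (((q:ℝ)^k)^2 - (q:ℝ)^k * K)
            - (q:ℝ)^k * ((k:ℝ) * ((q:ℝ)^k - (q:ℝ)^(k-b)) - s0)))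
          / (((q:ℝ)^k)^2 * ((q:ℝ)^b - 1)) := by
    rw [h1, hDq]
    field_simp
    ring
  have hquot : (0:ℝ) ≤ ((r:ℝ) * (((q:ℝ)^k)^2 * ((q:ℝ)^b - 1))
          - (q:ℝ)^b * ((2 * (t:ℝ) - b + 2) * (((q:ℝ)^k)^2 - (q:ℝ)^k * K)
            - (q:ℝ)^k * ((k:ℝ) * ((q:ℝ)^k - (q:ℝ)^(k-b)) - s0)))
          / (((q:ℝ)^k)^2 * ((q:ℝ)^b - 1)) := by
    apply div_nonneg
    · linarith [keyR]
    · have : (0:ℝ) < ((q:ℝ)^k)^2 := by positivity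
      nlinarith
  rw [ge_iff_le, hsR, heq]
  linarith [hquot]
end

section
/- Let f : F_2^k → F_2^l be a surjective linear map, k ≥ 2, t ≥ 1, and let P ⊆ F_2^r be a code indexed by F_2^k with d_2(p_i, p_j) ≥ max(2t − d_2(u_i, u_j), 0) whenever f(u_i) ≠ f(u_j). Then r ≥ (8t/3)(1 − 2^{−l}) − k + s/(3·2^{k−2}), where s = Σ_{u ∈ ker f} w_2(u). -/
open Finset

set_option linter.unusedSectionVars false
set_option maxHeartbeats 2000000

section aux
variable {α β : Type*} [Fintype α] [Fintype β] [DecidableEq β] [AddCommGroup α] [AddCommGroup β]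
lemma fiber_card_const (g : α →+ β) (hg : Function.Surjective g) (b b' : β) :
    (univ.filter (fun a => g a = b)).card = (univ.filter (fun a => g a = b')).card := by
  obtain ⟨c, hc⟩ := hg (b' - b)
  apply Finset.card_bij (fun a _ => a + c)
  · intro a ha
    simp only [mem_filter, mem_univ, true_and] at ha ⊢
    rw [map_add, ha, hc]; abel
  · intro a _ a2 _ h; exact add_right_cancel h
  · intro a ha
    simp only [mem_filter, mem_univ, true_and] at ha ⊢
    exact ⟨a - c, by rw [map_sub, ha, hc]; abel, by abel⟩

lemma fiber_card_mul (g : α →+ β) (hg : Function.Surjective g) (b : β) :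
    (univ.filter (fun a => g a = b)).card * Fintype.card β = Fintype.card α := by
  have h1 : (univ : Finset α).card = ∑ b' : β, (univ.filter (fun a => g a = b')).card :=
    Finset.card_eq_sum_card_fiberwise (fun x _ => mem_univ _)
  rw [show Fintype.card α = (univ : Finset α).card from Finset.card_univ.symm, h1,
    Finset.sum_congr rfl (fun b' _ => fiber_card_const g hg b' b), Finset.sum_const,
    Finset.card_univ, smul_eq_mul, mul_comm]
end aux


lemma zmod2_add_eq_zero (a b : ZMod 2) : a + b = 0 ↔ a = b := by revert a b; decide

lemma fun_add_eq_zero {n : ℕ} (x y : Fin n → ZMod 2) : x + y = 0 ↔ x = y := by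
  simp only [funext_iff, Pi.add_apply, Pi.zero_apply]
  exact forall_congr' fun j => zmod2_add_eq_zero _ _

lemma fun_self_add {n : ℕ} (x : Fin n → ZMod 2) : x + x = 0 := (fun_add_eq_zero x x).2 rfl

lemma dB_eq_wB_s10 {k : ℕ} (u v : Fin k → ZMod 2) :
    dB (ZMod 2) k 2 u v = wB (ZMod 2) k 2 (u + v) := by
  unfold dB wB hammingDist
  congr 1
  apply Finset.filter_congr
  intro i _
  have h : piB (ZMod 2) k 2 (u + v) i = piB (ZMod 2) k 2 u i + piB (ZMod 2) k 2 v i := by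
    funext j; rfl
  rw [h]
  simp only [ne_eq, fun_add_eq_zero]

lemma sum_shift {k : ℕ} (u : Fin k → ZMod 2) (F : (Fin k → ZMod 2) → ℕ) :
    ∑ v : Fin k → ZMod 2, F (u + v) = ∑ w : Fin k → ZMod 2, F w :=
  Fintype.sum_equiv (Equiv.addLeft u) _ _ (fun _ => rfl)

lemma piB_eq_zero_iff {k : ℕ} (w : Fin k → ZMod 2) (i : Fin k) :
    piB (ZMod 2) k 2 w i = 0 ↔ w i = 0 ∧ w ⟨(i.val + 1) % k, Nat.mod_lt _ i.pos⟩ = 0 := by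
  constructor
  · intro h
    refine ⟨?_, ?_⟩
    · have := congrFun h 0
      simpa [piB, Nat.mod_eq_of_lt i.isLt] using this
    · have := congrFun h 1
      simpa [piB] using this
  · rintro ⟨h0, h1⟩
    funext j
    fin_cases j
    · simpa [piB, Nat.mod_eq_of_lt i.isLt] using h0
    · simpa [piB] using h1

lemma succ_mod_ne {k : ℕ} (hk : 2 ≤ k) (i : Fin k) : i.val ≠ (i.val + 1) % k := by
  have hi := i.isLt
  rcases lt_or_ge (i.val + 1) k with h1 | h1
  · rw [Nat.mod_eq_of_lt h1]; omega
  · have hik : i.val + 1 = k := by omega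
    rw [hik, Nat.mod_self]; omega

def evHom {k : ℕ} (a b : Fin k) : (Fin k → ZMod 2) →+ (ZMod 2 × ZMod 2) where
  toFun w := (w a, w b)
  map_zero' := rfl
  map_add' _ _ := rfl

lemma evHom_surj {k : ℕ} (a b : Fin k) (hab : a ≠ b) : Function.Surjective (evHom a b) := by
  rintro ⟨x, y⟩
  refine ⟨Function.update (Function.update 0 a x) b y, ?_⟩
  simp only [evHom, AddMonoidHom.coe_mk, ZeroHom.coe_mk, Prod.mk.injEq]
  rw [Function.update_of_ne hab, Function.update_self, Function.update_self]
  exact ⟨rfl, rfl⟩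

lemma four_card_window (k : ℕ) (hk : 2 ≤ k) (i : Fin k) :
    4 * (univ.filter (fun w : Fin k → ZMod 2 => piB (ZMod 2) k 2 w i ≠ 0)).card = 3 * 2 ^ k := by
  set b : Fin k := ⟨(i.val + 1) % k, Nat.mod_lt _ i.pos⟩ with hb
  have hab : i ≠ b := Fin.ne_of_val_ne (succ_mod_ne hk i)
  have h4 : (univ.filter (fun w : Fin k → ZMod 2 => piB (ZMod 2) k 2 w i = 0)).card * 4 = 2 ^ k := by
    have h := fiber_card_mul (evHom i b) (evHom_surj i b hab) 0
    have hcards : Fintype.card (ZMod 2 × ZMod 2) = 4 := by simp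
    have hcardV : Fintype.card (Fin k → ZMod 2) = 2 ^ k := by simp
    rw [hcards, hcardV] at h
    rw [← h]
    refine congrArg (· * 4) (congrArg Finset.card ?_)
    ext w
    simp only [mem_filter, mem_univ, true_and]
    rw [piB_eq_zero_iff w i]
    exact ⟨fun h' => Prod.ext h'.1 h'.2, fun h' => ⟨congrArg Prod.fst h', congrArg Prod.snd h'⟩⟩
  have hcompl := Finset.card_filter_add_card_filter_not
    (s := (univ : Finset (Fin k → ZMod 2)))
    (p := fun w => piB (ZMod 2) k 2 w i = 0)
  rw [Finset.card_univ] at hcompl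
  have hcardV : Fintype.card (Fin k → ZMod 2) = 2 ^ k := by simp
  rw [hcardV] at hcompl
  simp only [ne_eq]
  generalize hN : (2 : ℕ) ^ k = N at h4 hcompl ⊢
  omega

lemma four_W (k : ℕ) (hk : 2 ≤ k) :
    4 * ∑ w : Fin k → ZMod 2, wB (ZMod 2) k 2 w = 3 * k * 2 ^ k := by
  have hswap : ∑ w : Fin k → ZMod 2, wB (ZMod 2) k 2 w
      = ∑ i : Fin k, (univ.filter (fun w : Fin k → ZMod 2 => piB (ZMod 2) k 2 w i ≠ 0)).card := by
    simp only [wB, Finset.card_filter]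
    exact Finset.sum_comm
  rw [hswap, Finset.mul_sum, Finset.sum_congr rfl (fun i _ => four_card_window k hk i),
    Finset.sum_const, Finset.card_univ, Fintype.card_fin, smul_eq_mul]
  ring

lemma count_pairs_eq {α γ : Type*} [Fintype α] [Fintype γ] [DecidableEq γ] (a : α → γ) :
    ∑ u : α, ∑ v : α, (if a u = a v then 1 else 0)
      = ∑ c : γ, ((univ.filter (fun u => a u = c)).card) ^ 2 := by
  have h1 : ∀ u : α, ∑ v : α, (if a u = a v then 1 else 0)
      = (univ.filter (fun v => a v = a u)).card := by
    intro u
    rw [Finset.card_filter]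
    exact Finset.sum_congr rfl fun v _ => by simp [eq_comm]
  rw [Finset.sum_congr rfl (fun u _ => h1 u),
    ← Finset.sum_fiberwise univ a (fun u => (univ.filter (fun v => a v = a u)).card)]
  refine Finset.sum_congr rfl fun c _ => ?_
  rw [sq, Finset.sum_congr rfl (fun u hu => by rw [(mem_filter.1 hu).2]), Finset.sum_const,
    smul_eq_mul]

lemma four_count_ne_le {α γ : Type*} [Fintype α] [Fintype γ] [DecidableEq γ] (a : α → γ)
    (hγ : Fintype.card γ = 4) :
    4 * (∑ u : α, ∑ v : α, if a u ≠ a v then 1 else 0) ≤ 3 * (Fintype.card α) ^ 2 := by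
  have hsplit : (∑ u : α, ∑ v : α, if a u ≠ a v then 1 else 0)
      + (∑ u : α, ∑ v : α, if a u = a v then 1 else 0) = (Fintype.card α) ^ 2 := by
    have h1 : ∀ u : α, (∑ v : α, if a u ≠ a v then 1 else 0)
        + (∑ v : α, if a u = a v then 1 else 0) = Fintype.card α := by
      intro u
      rw [← Finset.sum_add_distrib, ← Finset.card_univ, Finset.card_eq_sum_ones]
      exact Finset.sum_congr rfl fun v _ => by by_cases h : a u = a v <;> simp [h]
    rw [← Finset.sum_add_distrib, Finset.sum_congr rfl fun u _ => h1 u, Finset.sum_const,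
      Finset.card_univ, smul_eq_mul, sq]
  have hcs : (Fintype.card α) ^ 2 ≤ 4 * ∑ u : α, ∑ v : α, (if a u = a v then 1 else 0) := by
    rw [count_pairs_eq a]
    have hsum : ∑ c : γ, (univ.filter (fun u => a u = c)).card = Fintype.card α := by
      rw [← Finset.card_univ]
      exact (Finset.card_eq_sum_card_fiberwise (fun x _ => mem_univ _)).symm
    calc (Fintype.card α) ^ 2 = (∑ c : γ, (univ.filter (fun u => a u = c)).card) ^ 2 := by
          rw [hsum]
      _ ≤ (univ : Finset γ).card * ∑ c : γ, ((univ.filter (fun u => a u = c)).card) ^ 2 :=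
          sq_sum_le_card_mul_sum_sq
      _ = 4 * ∑ c : γ, ((univ.filter (fun u => a u = c)).card) ^ 2 := by
          rw [Finset.card_univ, hγ]
  generalize hM : (Fintype.card α) ^ 2 = M at *
  omega

lemma sum2_sub {ι : Type*} [Fintype ι] (F G : ι → ι → ℤ) :
    ∑ u : ι, ∑ v : ι, (F u v - G u v)
      = (∑ u : ι, ∑ v : ι, F u v) - ∑ u : ι, ∑ v : ι, G u v := by
  rw [← Finset.sum_sub_distrib]
  exact Finset.sum_congr rfl fun u _ => Finset.sum_sub_distrib _ _

lemma upper_bound {k r : ℕ} (q : (Fin k → ZMod 2) → Fin r → ZMod 2) :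
    4 * ∑ u : Fin k → ZMod 2, ∑ v : Fin k → ZMod 2, dB (ZMod 2) r 2 (q u) (q v)
      ≤ 3 * r * (2 ^ k) ^ 2 := by
  have hswap : ∑ u : Fin k → ZMod 2, ∑ v : Fin k → ZMod 2, dB (ZMod 2) r 2 (q u) (q v)
      = ∑ i : Fin r, ∑ u : Fin k → ZMod 2, ∑ v : Fin k → ZMod 2,
          (if piB (ZMod 2) r 2 (q u) i ≠ piB (ZMod 2) r 2 (q v) i then 1 else 0) := by
    simp only [dB, hammingDist, Finset.card_filter]
    rw [Finset.sum_congr rfl (fun u (_ : u ∈ univ) => Finset.sum_comm), Finset.sum_comm]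
  rw [hswap, Finset.mul_sum]
  have hbound : ∀ i : Fin r, 4 * (∑ u : Fin k → ZMod 2, ∑ v : Fin k → ZMod 2,
      if piB (ZMod 2) r 2 (q u) i ≠ piB (ZMod 2) r 2 (q v) i then 1 else 0)
        ≤ 3 * (2 ^ k) ^ 2 := by
    intro i
    have h := four_count_ne_le (fun u : Fin k → ZMod 2 => piB (ZMod 2) r 2 (q u) i)
      (by simp [Fintype.card_fun])
    have hcV : Fintype.card (Fin k → ZMod 2) = 2 ^ k := by simp
    rwa [hcV] at h
  calc ∑ i : Fin r, 4 * (∑ u : Fin k → ZMod 2, ∑ v : Fin k → ZMod 2,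
        if piB (ZMod 2) r 2 (q u) i ≠ piB (ZMod 2) r 2 (q v) i then 1 else 0)
      ≤ ∑ _i : Fin r, 3 * (2 ^ k) ^ 2 := Finset.sum_le_sum fun i _ => hbound i
    _ = 3 * r * (2 ^ k) ^ 2 := by
        rw [Finset.sum_const, Finset.card_univ, Fintype.card_fin, smul_eq_mul]
        ring

theorem plotkin_bound_FCSPC_binary
    (k l r t : ℕ) (hk : 2 ≤ k) (ht : 1 ≤ t)
    (f : (Fin k → ZMod 2) →ₗ[ZMod 2] (Fin l → ZMod 2)) (hf : Function.Surjective f)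
    (p : (Fin k → ZMod 2) → (Fin r → ZMod 2))
    (hp : ∀ u v : Fin k → ZMod 2, f u ≠ f v →
      (dB (ZMod 2) r 2 (p u) (p v) : ℤ) ≥ max (2 * (t : ℤ) - dB (ZMod 2) k 2 u v) 0) :
    (r : ℝ) ≥ (8 * (t : ℝ) / 3) * (1 - ((2 : ℝ) ^ l)⁻¹) - k +
      (∑ u ∈ Finset.univ.filter (fun u : Fin k → ZMod 2 => f u = 0), (wB (ZMod 2) k 2 u : ℝ)) /
        (3 * (2 : ℝ) ^ (k - 2)) := by
  classical
  set W : ℕ := ∑ w : Fin k → ZMod 2, wB (ZMod 2) k 2 w with hWdef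
  set s : ℕ := ∑ u ∈ Finset.univ.filter (fun u : Fin k → ZMod 2 => f u = 0),
    wB (ZMod 2) k 2 u with hsdef
  set K : ℕ := (Finset.univ.filter (fun u : Fin k → ZMod 2 => f u = 0)).card with hKdef
  have hcardV : Fintype.card (Fin k → ZMod 2) = 2 ^ k := by simp
  have hcardL : Fintype.card (Fin l → ZMod 2) = 2 ^ l := by simp
  have hg : Function.Surjective (f.toAddMonoidHom) := hf
  -- fiber size of f
  have hKl : K * 2 ^ l = 2 ^ k := by
    have h := fiber_card_mul f.toAddMonoidHom hg 0
    rw [hcardL, hcardV] at h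
    exact h
  -- total weight
  have h4W : 4 * W = 3 * k * 2 ^ k := four_W k hk
  -- sum of all pairwise distances
  have hAll : ∑ u : Fin k → ZMod 2, ∑ v : Fin k → ZMod 2, dB (ZMod 2) k 2 u v = 2 ^ k * W := by
    have h1 : ∀ u : Fin k → ZMod 2, ∑ v : Fin k → ZMod 2, dB (ZMod 2) k 2 u v = W := by
      intro u
      rw [Finset.sum_congr rfl (fun v (_ : v ∈ univ) => dB_eq_wB_s10 u v)]
      exact sum_shift u _
    rw [Finset.sum_congr rfl (fun u (_ : u ∈ univ) => h1 u), Finset.sum_const,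
      Finset.card_univ, hcardV, smul_eq_mul]
  -- sum of distances over pairs in the same fiber
  have hEqd : ∑ u : Fin k → ZMod 2, ∑ v : Fin k → ZMod 2,
      (if f u = f v then dB (ZMod 2) k 2 u v else 0) = 2 ^ k * s := by
    have h1 : ∀ u : Fin k → ZMod 2, ∑ v : Fin k → ZMod 2,
        (if f u = f v then dB (ZMod 2) k 2 u v else 0) = s := by
      intro u
      have h2 : ∀ v : Fin k → ZMod 2, (if f u = f v then dB (ZMod 2) k 2 u v else 0)
          = (fun w => if f w = 0 then wB (ZMod 2) k 2 w else 0) (u + v) := by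
        intro v
        have hcond : f (u + v) = 0 ↔ f u = f v := by
          rw [map_add]; exact fun_add_eq_zero (f u) (f v)
        simp only
        rw [dB_eq_wB_s10 u v]
        exact (if_congr hcond rfl rfl).symm
      rw [Finset.sum_congr rfl (fun v (_ : v ∈ univ) => h2 v),
        sum_shift u (fun w => if f w = 0 then wB (ZMod 2) k 2 w else 0), hsdef,
        Finset.sum_filter]
    rw [Finset.sum_congr rfl (fun u (_ : u ∈ univ) => h1 u), Finset.sum_const,
      Finset.card_univ, hcardV, smul_eq_mul]
  -- number of pairs in the same fiber
  have hCnt : ∑ u : Fin k → ZMod 2, ∑ v : Fin k → ZMod 2,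
      (if f u = f v then 1 else 0) = 2 ^ k * K := by
    have h1 : ∀ u : Fin k → ZMod 2, ∑ v : Fin k → ZMod 2, (if f u = f v then 1 else 0) = K := by
      intro u
      rw [← Finset.card_filter]
      have heq : (univ.filter (fun v : Fin k → ZMod 2 => f u = f v))
          = (univ.filter (fun v : Fin k → ZMod 2 => f.toAddMonoidHom v = f u)) := by
        ext v; simp [eq_comm]
      rw [heq, fiber_card_const f.toAddMonoidHom hg (f u) 0, hKdef]
      rfl
    rw [Finset.sum_congr rfl (fun u (_ : u ∈ univ) => h1 u), Finset.sum_const,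
      Finset.card_univ, hcardV, smul_eq_mul]
  -- upper bound
  have hup : 4 * ∑ u : Fin k → ZMod 2, ∑ v : Fin k → ZMod 2, dB (ZMod 2) r 2 (p u) (p v)
      ≤ 3 * r * (2 ^ k) ^ 2 := upper_bound p
  -- integer-level lower bound
  have hstep : ∀ u v : Fin k → ZMod 2,
      (if f u = f v then 0 else (2 * (t : ℤ) - dB (ZMod 2) k 2 u v))
        ≤ (dB (ZMod 2) r 2 (p u) (p v) : ℤ) := by
    intro u v
    split_ifs with h
    · positivity
    · exact le_trans (le_max_left _ _) (hp u v h)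
  have hs1 : ∑ u : Fin k → ZMod 2, ∑ v : Fin k → ZMod 2,
      (if f u = f v then 0 else (2 * (t : ℤ) - dB (ZMod 2) k 2 u v))
      ≤ ∑ u : Fin k → ZMod 2, ∑ v : Fin k → ZMod 2, (dB (ZMod 2) r 2 (p u) (p v) : ℤ) :=
    Finset.sum_le_sum fun u _ => Finset.sum_le_sum fun v _ => hstep u v
  -- rewrite LHS of hs1
  have hLHS : ∑ u : Fin k → ZMod 2, ∑ v : Fin k → ZMod 2,
      (if f u = f v then 0 else (2 * (t : ℤ) - dB (ZMod 2) k 2 u v))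
      = (2 * (t : ℤ) * 2 ^ k * 2 ^ k - 2 ^ k * W)
        - (2 * (t : ℤ) * (2 ^ k * K) - 2 ^ k * s) := by
    have hterm : ∀ u v : Fin k → ZMod 2,
        (if f u = f v then 0 else (2 * (t : ℤ) - dB (ZMod 2) k 2 u v))
        = (2 * (t : ℤ) - dB (ZMod 2) k 2 u v)
          - ((2 * (t : ℤ)) * (if f u = f v then 1 else 0)
            - (if f u = f v then (dB (ZMod 2) k 2 u v : ℤ) else 0)) := by
      intro u v; split_ifs <;> ring
    have e1 : ∑ u : Fin k → ZMod 2, ∑ v : Fin k → ZMod 2,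
        (2 * (t : ℤ) - dB (ZMod 2) k 2 u v)
        = 2 * (t : ℤ) * 2 ^ k * 2 ^ k - 2 ^ k * W := by
      rw [sum2_sub]
      have c1 : ∑ _u : Fin k → ZMod 2, ∑ _v : Fin k → ZMod 2, (2 * (t : ℤ))
          = 2 * (t : ℤ) * 2 ^ k * 2 ^ k := by
        simp only [Finset.sum_const, Finset.card_univ, hcardV, smul_eq_mul, nsmul_eq_mul]
        push_cast; ring
      have c2 : ∑ u : Fin k → ZMod 2, ∑ v : Fin k → ZMod 2, (dB (ZMod 2) k 2 u v : ℤ)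
          = ((2 ^ k * W : ℕ) : ℤ) := by
        rw [← hAll]; push_cast; rfl
      rw [c1, c2]; push_cast; ring
    have e2 : ∑ u : Fin k → ZMod 2, ∑ v : Fin k → ZMod 2,
        ((2 * (t : ℤ)) * (if f u = f v then 1 else 0))
        = 2 * (t : ℤ) * (2 ^ k * K) := by
      have c3 : ∑ u : Fin k → ZMod 2, ∑ v : Fin k → ZMod 2,
          ((if f u = f v then 1 else 0) : ℤ) = ((2 ^ k * K : ℕ) : ℤ) := by
        rw [← hCnt]; push_cast; rfl
      have cmul : ∑ u : Fin k → ZMod 2, ∑ v : Fin k → ZMod 2,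
          ((2 * (t : ℤ)) * (if f u = f v then 1 else 0))
          = (2 * (t : ℤ)) * ∑ u : Fin k → ZMod 2, ∑ v : Fin k → ZMod 2,
            ((if f u = f v then 1 else 0) : ℤ) := by
        rw [Finset.mul_sum]
        exact Finset.sum_congr rfl fun u _ => by rw [Finset.mul_sum]
      rw [cmul, c3]
      push_cast; ring
    have e3 : ∑ u : Fin k → ZMod 2, ∑ v : Fin k → ZMod 2,
        (if f u = f v then (dB (ZMod 2) k 2 u v : ℤ) else 0) = 2 ^ k * s := by
      have c4 : ∑ u : Fin k → ZMod 2, ∑ v : Fin k → ZMod 2,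
          (if f u = f v then (dB (ZMod 2) k 2 u v : ℤ) else 0)
          = ((∑ u : Fin k → ZMod 2, ∑ v : Fin k → ZMod 2,
            (if f u = f v then dB (ZMod 2) k 2 u v else 0) : ℕ) : ℤ) := by
        push_cast; rfl
      rw [c4, hEqd]; push_cast; ring
    rw [Finset.sum_congr rfl (fun u (_ : u ∈ univ) =>
      Finset.sum_congr rfl (fun v (_ : v ∈ univ) => hterm u v)), sum2_sub, e1, sum2_sub, e2, e3]
  -- assemble the integer inequality
  have hD : (∑ u : Fin k → ZMod 2, ∑ v : Fin k → ZMod 2, (dB (ZMod 2) r 2 (p u) (p v) : ℤ))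
      = ((∑ u : Fin k → ZMod 2, ∑ v : Fin k → ZMod 2, dB (ZMod 2) r 2 (p u) (p v) : ℕ) : ℤ) := by
    push_cast; rfl
  have hupZ : 4 * ((∑ u : Fin k → ZMod 2, ∑ v : Fin k → ZMod 2,
      dB (ZMod 2) r 2 (p u) (p v) : ℕ) : ℤ) ≤ 3 * r * ((2 : ℤ) ^ k) ^ 2 := by
    exact_mod_cast hup
  have h4WZ : 4 * (W : ℤ) = 3 * k * 2 ^ k := by exact_mod_cast h4W
  rw [hLHS, hD] at hs1
  have hZ : 8 * (t : ℤ) * 2 ^ k * 2 ^ k - 8 * t * ((2 : ℤ) ^ k * K)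
      - 3 * k * 2 ^ k * 2 ^ k + 4 * ((2 : ℤ) ^ k * s)
      ≤ 3 * r * 2 ^ k * 2 ^ k := by nlinarith [hs1, hupZ, h4WZ]
  have hPpos : (0 : ℤ) < 2 ^ k := by positivity
  have hZ2 : 8 * (t : ℤ) * 2 ^ k - 8 * t * K - 3 * k * 2 ^ k + 4 * s ≤ 3 * r * 2 ^ k := by
    have h' : (8 * (t : ℤ) * 2 ^ k - 8 * t * K - 3 * k * 2 ^ k + 4 * s) * 2 ^ k
        ≤ (3 * r * 2 ^ k) * 2 ^ k := by nlinarith [hZ]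
    exact le_of_mul_le_mul_right h' hPpos
  -- pass to the reals
  have hR : 8 * (t : ℝ) * 2 ^ k - 8 * t * K - 3 * k * 2 ^ k + 4 * s ≤ 3 * r * 2 ^ k := by
    exact_mod_cast hZ2
  have hKlR : (K : ℝ) * 2 ^ l = 2 ^ k := by exact_mod_cast hKl
  have hQpos : (0 : ℝ) < 2 ^ k := by positivity
  have hQB : (2 : ℝ) ^ k = 4 * 2 ^ (k - 2) := by
    calc (2 : ℝ) ^ k = 2 ^ ((k - 2) + 2) := by rw [Nat.sub_add_cancel hk]
      _ = 4 * 2 ^ (k - 2) := by rw [pow_add]; ring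
  have hinv : ((2 : ℝ) ^ l)⁻¹ = (K : ℝ) / 2 ^ k := by
    rw [eq_div_iff hQpos.ne', ← hKlR]
    field_simp
  have hsum : (∑ u ∈ Finset.univ.filter (fun u : Fin k → ZMod 2 => f u = 0),
      (wB (ZMod 2) k 2 u : ℝ)) = (s : ℝ) := by
    rw [hsdef]; push_cast; rfl
  rw [hsum, hinv]
  have hcomb : (8 * (t : ℝ) / 3) * (1 - (K : ℝ) / 2 ^ k) - k + (s : ℝ) / (3 * 2 ^ (k - 2))
      = (8 * (t : ℝ) * 2 ^ k - 8 * t * K - 3 * k * 2 ^ k + 4 * s) / (3 * 2 ^ k) := by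
    rw [hQB]
    have hBpos : (0 : ℝ) < 2 ^ (k - 2) := by positivity
    field_simp
  rw [ge_iff_le, hcomb, div_le_iff₀ (by positivity)]
  linarith [hR]
end
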